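/- Let d be a positive integer and let A, B be finite sets of Boolean vectors in {0,1}^d (functions Fin d → ℝ with values in {0,1}). For a ∈ A let π(a) be the plane curve with vertices π(a)_i = (3i, 1 + 2a_i), and for b ∈ B let σ(b) be the plane curve with vertices σ(b)_i = (3i, 2 − 2b_i), for 1 ≤ i ≤ d. Then there exists a pair (a, b) ∈ A × B with ⟨a, b⟩ = 0 if and only if there exists a pair (a, b) ∈ A × B with discrete Fréchet distance d_F(π(a), σ(b)) ≤ 1. -/

import Mathlib

private lemma norm_pair (x : EuclideanSpace ℝ (Fin 2)) (p q u w : ℝ)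
    (h : x = ![p, q] - ![u, w]) :
    ‖x‖ = Real.sqrt ((p-u)^2 + (q-w)^2) := by
  rw [EuclideanSpace.norm_eq, h]
  congr 1
  simp [Fin.sum_univ_two, sq_abs]

private lemma sqrt_case_le (c x y : ℝ) (hx : x = 0 ∨ x = 1) (hy : y = 0 ∨ y = 1)
    (hxy : x * y = 0) :
    Real.sqrt ((c - c)^2 + ((1 + 2*x) - (2 - 2*y))^2) ≤ 1 := by
  rcases hx with rfl|rfl <;> rcases hy with rfl|rfl <;> simp_all <;> norm_num

private lemma sqrt_case_eq (c : ℝ) :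
    Real.sqrt ((c - c)^2 + ((1 + 2*(1:ℝ)) - (2 - 2*1))^2) = 3 := by
  norm_num



/-- A traversal of two curves of length `d`: a sequence `f 1, …, f T` of index
pairs in `{1,…,d}²` with `f 1 = (1,1)`, `f T = (d,d)`, where at each step the
first index advances, the second advances, or both advance together. -/
def IsTraversal (d T : ℕ) (f : ℕ → ℕ × ℕ) : Prop :=
  1 ≤ T ∧ f 1 = (1, 1) ∧ f T = (d, d) ∧
  (∀ t, 1 ≤ t → t ≤ T →
    1 ≤ (f t).1 ∧ (f t).1 ≤ d ∧ 1 ≤ (f t).2 ∧ (f t).2 ≤ d) ∧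
  (∀ t, 1 ≤ t → t < T →
    f (t + 1) = ((f t).1 + 1, (f t).2) ∨
    f (t + 1) = ((f t).1, (f t).2 + 1) ∨
    f (t + 1) = ((f t).1 + 1, (f t).2 + 1))

/-- The discrete Fréchet distance between two curves of length `d` (with
vertices `π 1, …, π d` and `σ 1, …, σ d`): the infimum over all traversals of
the maximum distance `‖π (f t).1 - σ (f t).2‖` along the traversal. -/
noncomputable def discreteFrechetDist (d : ℕ)
    (π σ : ℕ → EuclideanSpace ℝ (Fin 2)) : ℝ :=
  sInf { r | ∃ T f, ∃ hT : 1 ≤ T, IsTraversal d T f ∧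
    r = (Finset.Icc 1 T).sup' (Finset.nonempty_Icc.mpr hT)
      (fun t => ‖π (f t).1 - σ (f t).2‖) }


private lemma diag_traversal (d : ℕ) (hd : 0 < d) :
    IsTraversal d d (fun t => (t, t)) := by
  refine ⟨hd, rfl, rfl, fun t h1 h2 => ⟨h1, h2, h1, h2⟩, fun t _ _ => Or.inr (Or.inr rfl)⟩

/-- **Correctness of the reduction from Orthogonal Vectors to Bichromatic
Closest Pair under the Fréchet distance.**
For finite sets `A, B` of Boolean vectors in `{0,1}^d`, embedded as plane
curves with vertices `piC a i = (3i, 1 + 2 aᵢ)` and `sigC b i = (3i, 2 - 2 bᵢ)`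
for `1 ≤ i ≤ d`, there is an orthogonal pair `(a, b) ∈ A × B` iff some pair
has discrete Fréchet distance at most `1`. -/
theorem ov_iff_bichromatic_frechet (d : ℕ) (hd : 0 < d)
    (A B : Finset (Fin d → ℝ))
    (hA : ∀ a ∈ A, ∀ i, a i = 0 ∨ a i = 1)
    (hB : ∀ b ∈ B, ∀ i, b i = 0 ∨ b i = 1)
    (piC sigC : (Fin d → ℝ) → ℕ → EuclideanSpace ℝ (Fin 2))
    (hpi : ∀ (v : Fin d → ℝ) (i : ℕ) (h1 : 1 ≤ i) (h2 : i ≤ d),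
      piC v i = ![3 * (i : ℝ), 1 + 2 * v ⟨i - 1, by omega⟩])
    (hsig : ∀ (v : Fin d → ℝ) (i : ℕ) (h1 : 1 ≤ i) (h2 : i ≤ d),
      sigC v i = ![3 * (i : ℝ), 2 - 2 * v ⟨i - 1, by omega⟩]) :
    (∃ a ∈ A, ∃ b ∈ B, (∑ i, a i * b i) = 0) ↔
    (∃ a ∈ A, ∃ b ∈ B, discreteFrechetDist d (piC a) (sigC b) ≤ 1) := by
  have hSmem : ∀ a b : Fin d → ℝ,
      ((Finset.Icc 1 d).sup' (Finset.nonempty_Icc.mpr hd)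
        (fun t => ‖piC a ((fun t => (t,t)) t).1 - sigC b ((fun t => (t,t)) t).2‖)) ∈
      { r | ∃ T f, ∃ hT : 1 ≤ T, IsTraversal d T f ∧
        r = (Finset.Icc 1 T).sup' (Finset.nonempty_Icc.mpr hT)
          (fun t => ‖piC a (f t).1 - sigC b (f t).2‖) } := by
    intro a b
    exact ⟨d, fun t => (t, t), hd, diag_traversal d hd, rfl⟩
  have hbdd : ∀ a b : Fin d → ℝ, BddBelow
      { r | ∃ T f, ∃ hT : 1 ≤ T, IsTraversal d T f ∧
        r = (Finset.Icc 1 T).sup' (Finset.nonempty_Icc.mpr hT)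
          (fun t => ‖piC a (f t).1 - sigC b (f t).2‖) } := by
    intro a b
    refine ⟨0, ?_⟩
    rintro r ⟨T, f, hT, htrav, rfl⟩
    exact le_trans (norm_nonneg _)
      (Finset.le_sup' (fun t => ‖piC a (f t).1 - sigC b (f t).2‖)
        (Finset.mem_Icc.mpr ⟨le_refl 1, hT⟩))
  constructor
  · rintro ⟨a, ha, b, hb, hab⟩
    refine ⟨a, ha, b, hb, ?_⟩
    have horth : ∀ i, a i * b i = 0 := by
      intro i
      have h0 : ∀ j ∈ Finset.univ, 0 ≤ a j * b j := by
        intro j _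
        rcases hA a ha j with h|h <;> rcases hB b hb j with h'|h' <;> simp [h, h']
      exact (Finset.sum_eq_zero_iff_of_nonneg h0).mp hab i (Finset.mem_univ i)
    refine csInf_le_of_le (hbdd a b) (hSmem a b) ?_
    apply Finset.sup'_le
    intro t ht
    obtain ⟨h1, h2⟩ := Finset.mem_Icc.mp ht
    rw [norm_pair _ _ _ _ _ (by rw [WithLp.ofLp_sub, hpi a t h1 h2, hsig b t h1 h2])]
    exact sqrt_case_le _ _ _ (hA a ha _) (hB b hb _) (horth _)
  · rintro ⟨a, ha, b, hb, hle⟩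
    refine ⟨a, ha, b, hb, ?_⟩
    by_contra hne
    obtain ⟨k, hk⟩ : ∃ k, a k * b k ≠ 0 := by
      by_contra h
      push_neg at h
      exact hne (Finset.sum_eq_zero fun i _ => h i)
    have hak : a k = 1 := by
      rcases hA a ha k with h|h
      · simp [h] at hk
      · exact h
    have hbk : b k = 1 := by
      rcases hB b hb k with h|h
      · simp [h] at hk
      · exact h
    have h3 : (3:ℝ) ≤ discreteFrechetDist d (piC a) (sigC b) := by
      apply le_csInf ⟨_, hSmem a b⟩
      rintro r ⟨T, f, hT, ⟨hT1, hstart, hend, hbounds, hstep⟩, rfl⟩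
      by_contra hlt
      push_neg at hlt
      have hsup : ∀ t, 1 ≤ t → t ≤ T →
          ‖piC a (f t).1 - sigC b (f t).2‖ < 3 := by
        intro t h1 h2
        exact lt_of_le_of_lt
          (Finset.le_sup' (fun t => ‖piC a (f t).1 - sigC b (f t).2‖)
            (Finset.mem_Icc.mpr ⟨h1, h2⟩)) hlt
      have hdiag : ∀ t, 1 ≤ t → t ≤ T → (f t).1 = (f t).2 := by
        intro t h1 h2
        by_contra hne'
        obtain ⟨hi1, hi2, hj1, hj2⟩ := hbounds t h1 h2
        have hnorm : (3:ℝ) ≤ ‖piC a (f t).1 - sigC b (f t).2‖ := by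
          rw [norm_pair _ _ _ _ _ (by rw [WithLp.ofLp_sub, hpi a _ hi1 hi2, hsig b _ hj1 hj2])]
          have habs : (3:ℝ) ≤ |3*((f t).1:ℝ) - 3*((f t).2:ℝ)| := by
            rcases lt_or_gt_of_ne hne' with h|h
            · have : ((f t).1 : ℝ) + 1 ≤ ((f t).2 : ℝ) := by exact_mod_cast h
              rw [abs_of_nonpos (by linarith)]; linarith
            · have : ((f t).2 : ℝ) + 1 ≤ ((f t).1 : ℝ) := by exact_mod_cast h
              rw [abs_of_nonneg (by linarith)]; linarith
          calc (3:ℝ) ≤ |3*((f t).1:ℝ) - 3*((f t).2:ℝ)| := habs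
            _ = Real.sqrt ((3*((f t).1:ℝ) - 3*((f t).2:ℝ))^2) :=
              (Real.sqrt_sq_eq_abs _).symm
            _ ≤ _ := Real.sqrt_le_sqrt (le_add_of_nonneg_right (sq_nonneg _))
        exact absurd (hsup t h1 h2) (not_lt.mpr hnorm)
      have hft : ∀ t, 1 ≤ t → t ≤ T → f t = (t, t) := by
        intro t
        induction t with
        | zero => omega
        | succ n ih =>
          intro h1 h2
          by_cases hn : n = 0
          · subst hn; exact hstart
          · have h1' : 1 ≤ n := by omega
            have hfn : f n = (n, n) := ih h1' (by omega)
            rcases hstep n h1' (by omega) with hc|hc|hc <;> rw [hfn] at hc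
            · have := hdiag (n+1) (by omega) h2
              rw [hc] at this; simp at this
            · have := hdiag (n+1) (by omega) h2
              rw [hc] at this; simp at this
            · exact hc
      have hTd : T = d := by
        have := hft T hT1 le_rfl
        rw [hend] at this
        simp [Prod.ext_iff] at this
        omega
      set t₀ := (k : ℕ) + 1 with ht₀
      have hkd : (k : ℕ) < d := k.isLt
      have h1 : 1 ≤ t₀ := by omega
      have h2 : t₀ ≤ T := by omega
      have hf0 : f t₀ = (t₀, t₀) := hft t₀ h1 h2
      have hnorm : ‖piC a (f t₀).1 - sigC b (f t₀).2‖ = 3 := by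
        rw [hf0]
        have hidx : (⟨t₀ - 1, by omega⟩ : Fin d) = k := by
          ext; simp [ht₀]
        rw [norm_pair _ _ _ _ _
          (by rw [WithLp.ofLp_sub, hpi a t₀ h1 (by omega), hsig b t₀ h1 (by omega)]), hidx, hak, hbk]
        exact sqrt_case_eq _
      have := hsup t₀ h1 h2
      rw [hnorm] at this
      exact lt_irrefl _ this
    linarith
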